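/- arXiv:1410.6880 — 2 statements merged into one kernel-verified Lean document; each statement's English description precedes it below -/
import Mathlib

section
/- (KKT-based zero test.) Suppose β* is an optimal solution of the overlapping group lasso problem min_β ½‖y − Xβ‖₂² + λ Σ_{g∈G} √(n_g)‖β_g‖₂, and let θ* = (y − Xβ*)/λ. Fix a group g ∈ G and let Ḡ₁ be the set of groups h ∈ G \ {g} with h ⊆ g. If there exist vectors w_h ∈ ℝ^{h} with ‖w_h‖₂ ≤ 1 for each h ∈ Ḡ₁ such that √( Σ_{j∈g} ( x_jᵀθ* − Σ_{h∈Ḡ₁: j∈h} √(n_h)·(w_h)_j )² ) < √(n_g), then β*_g = 0. -/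
/-- KKT-based zero test for overlapping group lasso: if the screening quantity for
group g (using inclusive subgroups Ḡ₁) is below √(n_g), then β*_g = 0. -/
theorem kkt_zero_test {N J : ℕ} (X : Matrix (Fin N) (Fin J) ℝ) (y : Fin N → ℝ)
    (lam : ℝ) (hlam : 0 < lam)
    (G : Finset (Finset (Fin J))) (g : Finset (Fin J)) (hg : g ∈ G)
    (βstar : Fin J → ℝ)
    (hopt : ∀ β : Fin J → ℝ,
      (1 / 2) * (∑ i, (y i - X.mulVec βstar i) ^ 2)
        + lam * ∑ h ∈ G, Real.sqrt (h.card : ℝ) * Real.sqrt (∑ j ∈ h, βstar j ^ 2)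
      ≤ (1 / 2) * (∑ i, (y i - X.mulVec β i) ^ 2)
        + lam * ∑ h ∈ G, Real.sqrt (h.card : ℝ) * Real.sqrt (∑ j ∈ h, β j ^ 2))
    (θstar : Fin N → ℝ) (hθ : ∀ i, θstar i = (y i - X.mulVec βstar i) / lam)
    (G1 : Finset (Finset (Fin J))) (hG1 : G1 = (G.erase g).filter (fun h => h ⊆ g))
    (w : Finset (Fin J) → Fin J → ℝ)
    (hw : ∀ h ∈ G1, Real.sqrt (∑ j ∈ h, (w h j) ^ 2) ≤ 1)
    (hscreen : Real.sqrt (∑ j ∈ g,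
        ((∑ i, X i j * θstar i)
          - ∑ h ∈ G1, (if j ∈ h then Real.sqrt (h.card : ℝ) * w h j else 0)) ^ 2)
      < Real.sqrt (g.card : ℝ)) :
    ∀ j ∈ g, βstar j = 0 := by
  classical
  -- notation
  set r : Fin N → ℝ := fun i => y i - X.mulVec βstar i with hrdef
  set d : Fin J → ℝ := fun j => if j ∈ g then βstar j else 0 with hddef
  set u : Fin N → ℝ := fun i => ∑ j, X i j * d j with hudef
  set c : Fin J → ℝ :=
    fun j => ∑ h ∈ G1, (if j ∈ h then Real.sqrt (h.card : ℝ) * w h j else 0) with hcdef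
  have hQ : (0:ℝ) ≤ ∑ i, u i ^ 2 := Finset.sum_nonneg fun i _ => sq_nonneg _
  -- abbreviations for the key constants
  obtain ⟨C, hCdef⟩ : ∃ C : ℝ, C = ∑ i, r i * u i := ⟨_, rfl⟩
  obtain ⟨Q, hQdef⟩ : ∃ Q : ℝ, Q = ∑ i, u i ^ 2 := ⟨_, rfl⟩
  obtain ⟨K, hKdef⟩ : ∃ K : ℝ, K = Real.sqrt (g.card : ℝ) * Real.sqrt (∑ j ∈ g, βstar j ^ 2)
      + ∑ h ∈ G1, Real.sqrt (h.card : ℝ) * Real.sqrt (∑ j ∈ h, βstar j ^ 2) := ⟨_, rfl⟩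
  rw [← hQdef] at hQ
  -- Key first-order inequality from optimality along the direction d
  have key : ∀ t : ℝ, 0 < t → t ≤ 1 → 0 ≤ (C - lam * K) + t * (Q / 2) := by
    intro t ht ht1
    have h1t : (0:ℝ) ≤ 1 - t := by linarith
    set β' : Fin J → ℝ := fun j => βstar j - t * d j with hβ'def
    have hmv : ∀ i, y i - X.mulVec β' i = r i + t * u i := by
      intro i
      have e : X.mulVec β' i = X.mulVec βstar i - t * u i := by
        simp only [Matrix.mulVec, dotProduct, hβ'def, hudef, mul_sub,
          Finset.sum_sub_distrib, Finset.mul_sum]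
        congr 1
        exact Finset.sum_congr rfl fun j _ => by ring
      rw [e]; simp only [hrdef]; ring
    have hloss : ∑ i, (y i - X.mulVec β' i) ^ 2
        = (∑ i, (y i - X.mulVec βstar i) ^ 2) + (2 * t * C + t ^ 2 * Q) := by
      have e1 : ∀ i ∈ (Finset.univ : Finset (Fin N)), (y i - X.mulVec β' i) ^ 2
          = (y i - X.mulVec βstar i) ^ 2 + (2 * t * (r i * u i) + t ^ 2 * u i ^ 2) := by
        intro i _
        rw [hmv i]
        have : y i - X.mulVec βstar i = r i := rfl
        rw [this]; ring
      rw [Finset.sum_congr rfl e1, Finset.sum_add_distrib, Finset.sum_add_distrib,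
        ← Finset.mul_sum, ← Finset.mul_sum, ← hCdef, ← hQdef]
    -- penalty comparison
    have hgsub : ∀ h : Finset (Fin J), h ⊆ g →
        Real.sqrt (∑ j ∈ h, β' j ^ 2) = (1 - t) * Real.sqrt (∑ j ∈ h, βstar j ^ 2) := by
      intro h hsub
      have e : ∀ j ∈ h, β' j ^ 2 = (1 - t) ^ 2 * βstar j ^ 2 := by
        intro j hj
        have hjg : j ∈ g := hsub hj
        simp only [hβ'def, hddef, if_pos hjg]; ring
      rw [Finset.sum_congr rfl e, ← Finset.mul_sum,
        Real.sqrt_mul (sq_nonneg _), Real.sqrt_sq h1t]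
    have hle : ∀ h : Finset (Fin J),
        Real.sqrt (∑ j ∈ h, β' j ^ 2) ≤ Real.sqrt (∑ j ∈ h, βstar j ^ 2) := by
      intro h
      apply Real.sqrt_le_sqrt
      apply Finset.sum_le_sum
      intro j _
      by_cases hjg : j ∈ g
      · simp only [hβ'def, hddef, if_pos hjg]
        have e : (βstar j - t * βstar j) ^ 2 = (1 - t) ^ 2 * βstar j ^ 2 := by ring
        rw [e]
        nlinarith [sq_nonneg (βstar j), mul_nonneg (mul_nonneg ht.le (by linarith : (0:ℝ) ≤ 2 - t)) (sq_nonneg (βstar j))]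
      · simp only [hβ'def, hddef, if_neg hjg, mul_zero, sub_zero]
        exact le_refl _
    have hsplitf : ∀ f : Finset (Fin J) → ℝ, ∑ h ∈ G, f h
        = f g + ((∑ h ∈ G1, f h) + ∑ h ∈ (G.erase g).filter (fun h => ¬ h ⊆ g), f h) := by
      intro f
      rw [← Finset.add_sum_erase _ f hg, hG1, Finset.sum_filter_add_sum_filter_not]
    have hpen : ∑ h ∈ G, Real.sqrt (h.card : ℝ) * Real.sqrt (∑ j ∈ h, β' j ^ 2)
        ≤ (∑ h ∈ G, Real.sqrt (h.card : ℝ) * Real.sqrt (∑ j ∈ h, βstar j ^ 2)) - t * K := by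
      rw [hsplitf (fun h => Real.sqrt (h.card : ℝ) * Real.sqrt (∑ j ∈ h, β' j ^ 2)),
          hsplitf (fun h => Real.sqrt (h.card : ℝ) * Real.sqrt (∑ j ∈ h, βstar j ^ 2))]
      have hgterm : Real.sqrt (g.card : ℝ) * Real.sqrt (∑ j ∈ g, β' j ^ 2)
          = (1 - t) * (Real.sqrt (g.card : ℝ) * Real.sqrt (∑ j ∈ g, βstar j ^ 2)) := by
        rw [hgsub g (subset_refl g)]; ring
      have hG1term : ∑ h ∈ G1, Real.sqrt (h.card : ℝ) * Real.sqrt (∑ j ∈ h, β' j ^ 2)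
          = (1 - t) * ∑ h ∈ G1, Real.sqrt (h.card : ℝ) * Real.sqrt (∑ j ∈ h, βstar j ^ 2) := by
        rw [Finset.mul_sum]
        apply Finset.sum_congr rfl
        intro h hh
        have hsub : h ⊆ g := by
          rw [hG1] at hh; exact (Finset.mem_filter.mp hh).2
        rw [hgsub h hsub]; ring
      have hrest : ∑ h ∈ (G.erase g).filter (fun h => ¬ h ⊆ g),
            Real.sqrt (h.card : ℝ) * Real.sqrt (∑ j ∈ h, β' j ^ 2)
          ≤ ∑ h ∈ (G.erase g).filter (fun h => ¬ h ⊆ g),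
            Real.sqrt (h.card : ℝ) * Real.sqrt (∑ j ∈ h, βstar j ^ 2) :=
        Finset.sum_le_sum fun h _ => mul_le_mul_of_nonneg_left (hle h) (Real.sqrt_nonneg _)
      rw [hgterm, hG1term, hKdef]
      nlinarith [hrest]
    have h0 := hopt β'
    rw [hloss] at h0
    have hpen' := mul_le_mul_of_nonneg_left hpen hlam.le
    have h1 : 0 ≤ t * ((C - lam * K) + t * (Q / 2)) := by nlinarith [h0, hpen']
    exact (mul_nonneg_iff_of_pos_left ht).mp h1
  -- Conclude the first-order condition: C ≥ lam * K
  have hA : 0 ≤ C - lam * K := by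
    by_contra hA
    push_neg at hA
    have hB : (0:ℝ) ≤ Q / 2 := by positivity
    set A : ℝ := C - lam * K with hAdef
    have hApos : 0 < -A := by simp only [hAdef]; linarith
    set t : ℝ := min 1 (-A / (2 * (Q / 2) + 1)) with htdef
    have ht : 0 < t := lt_min one_pos (div_pos hApos (by linarith))
    have ht1 : t ≤ 1 := min_le_left _ _
    have hkey := key t ht ht1
    have h2 : t ≤ -A / (2 * (Q / 2) + 1) := min_le_right _ _
    have h3 : t * (Q / 2) ≤ (-A / (2 * (Q / 2) + 1)) * (Q / 2) :=
      mul_le_mul_of_nonneg_right h2 hB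
    have h4 : (-A / (2 * (Q / 2) + 1)) * (Q / 2) ≤ -A / 2 := by
      rw [div_mul_eq_mul_div, div_le_div_iff₀ (by linarith) two_pos]
      nlinarith [hApos, hB]
    linarith
  -- Identify C with the screening inner product
  have hru : C = lam * ∑ j ∈ g, (∑ i, X i j * θstar i) * βstar j := by
    have hr : ∀ i, r i = lam * θstar i := by
      intro i
      rw [hθ i]
      field_simp
      rfl
    calc C = ∑ i, ∑ j, lam * θstar i * (X i j * d j) := by
          rw [hCdef]
          apply Finset.sum_congr rfl
          intro i _
          rw [hr i, hudef, Finset.mul_sum]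
      _ = ∑ j, ∑ i, lam * θstar i * (X i j * d j) := Finset.sum_comm
      _ = ∑ j, d j * lam * (∑ i, X i j * θstar i) := by
          apply Finset.sum_congr rfl
          intro j _
          rw [Finset.mul_sum]
          exact Finset.sum_congr rfl fun i _ => by ring
      _ = ∑ j, (if j ∈ g then lam * ((∑ i, X i j * θstar i) * βstar j) else 0) := by
          apply Finset.sum_congr rfl
          intro j _
          by_cases hj : j ∈ g
          · simp only [hddef, if_pos hj]; ring
          · simp only [hddef, if_neg hj]; ring
      _ = ∑ j ∈ Finset.univ ∩ g, lam * ((∑ i, X i j * θstar i) * βstar j) :=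
          Finset.sum_ite_mem _ _ _
      _ = lam * ∑ j ∈ g, (∑ i, X i j * θstar i) * βstar j := by
          rw [Finset.univ_inter, Finset.mul_sum]
  -- Final contradiction argument
  intro j0 hj0
  by_contra hne
  have hS : 0 < ∑ j ∈ g, βstar j ^ 2 := by
    have h1 : βstar j0 ^ 2 ≤ ∑ j ∈ g, βstar j ^ 2 :=
      Finset.single_le_sum (f := fun j => βstar j ^ 2) (fun j _ => sq_nonneg _) hj0
    have h2 : 0 < βstar j0 ^ 2 := by positivity
    linarith
  have hPg : 0 < Real.sqrt (∑ j ∈ g, βstar j ^ 2) := Real.sqrt_pos.mpr hS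
  have hsum_a : ∑ j ∈ g, ((∑ i, X i j * θstar i) - c j) * βstar j
      < Real.sqrt (g.card : ℝ) * Real.sqrt (∑ j ∈ g, βstar j ^ 2) := by
    calc ∑ j ∈ g, ((∑ i, X i j * θstar i) - c j) * βstar j
        ≤ Real.sqrt (∑ j ∈ g, ((∑ i, X i j * θstar i) - c j) ^ 2)
            * Real.sqrt (∑ j ∈ g, βstar j ^ 2) :=
          Real.sum_mul_le_sqrt_mul_sqrt _ _ _
      _ < Real.sqrt (g.card : ℝ) * Real.sqrt (∑ j ∈ g, βstar j ^ 2) :=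
          mul_lt_mul_of_pos_right hscreen hPg
  have hsum_c : ∑ j ∈ g, c j * βstar j
      ≤ ∑ h ∈ G1, Real.sqrt (h.card : ℝ) * Real.sqrt (∑ j ∈ h, βstar j ^ 2) := by
    have e1 : ∀ j ∈ g, c j * βstar j
        = ∑ h ∈ G1, (if j ∈ h then Real.sqrt (h.card : ℝ) * (w h j * βstar j) else 0) := by
      intro j _
      rw [hcdef, Finset.sum_mul]
      apply Finset.sum_congr rfl
      intro h _
      by_cases hh : j ∈ h
      · simp only [if_pos hh]; ring
      · simp only [if_neg hh, zero_mul]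
    rw [Finset.sum_congr rfl e1, Finset.sum_comm]
    apply Finset.sum_le_sum
    intro h hh
    have hsub : h ⊆ g := by rw [hG1] at hh; exact (Finset.mem_filter.mp hh).2
    have e2 : ∑ j ∈ g, (if j ∈ h then Real.sqrt (h.card : ℝ) * (w h j * βstar j) else 0)
        = Real.sqrt (h.card : ℝ) * ∑ j ∈ h, w h j * βstar j := by
      rw [Finset.sum_ite_mem, Finset.inter_eq_right.mpr hsub, Finset.mul_sum]
    rw [e2]
    have hcs := Real.sum_mul_le_sqrt_mul_sqrt h (w h) βstar
    have hw' := hw h hh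
    calc Real.sqrt (h.card : ℝ) * ∑ j ∈ h, w h j * βstar j
        ≤ Real.sqrt (h.card : ℝ)
            * (Real.sqrt (∑ j ∈ h, w h j ^ 2) * Real.sqrt (∑ j ∈ h, βstar j ^ 2)) :=
          mul_le_mul_of_nonneg_left hcs (Real.sqrt_nonneg _)
      _ ≤ Real.sqrt (h.card : ℝ) * (1 * Real.sqrt (∑ j ∈ h, βstar j ^ 2)) := by
          apply mul_le_mul_of_nonneg_left _ (Real.sqrt_nonneg _)
          exact mul_le_mul_of_nonneg_right hw' (Real.sqrt_nonneg _)
      _ = Real.sqrt (h.card : ℝ) * Real.sqrt (∑ j ∈ h, βstar j ^ 2) := by ring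
  have hKle : K ≤ ∑ j ∈ g, (∑ i, X i j * θstar i) * βstar j := by
    rw [hru] at hA
    nlinarith [hA, hlam]
  have hdecomp : ∑ j ∈ g, (∑ i, X i j * θstar i) * βstar j
      = ∑ j ∈ g, ((∑ i, X i j * θstar i) - c j) * βstar j + ∑ j ∈ g, c j * βstar j := by
    rw [← Finset.sum_add_distrib]
    exact Finset.sum_congr rfl fun j _ => by ring
  rw [hKdef] at hKle
  linarith [hsum_a, hsum_c, hKle, hdecomp]
end

section
/- (Theorem 1, OLS screening rule.) Consider the overlapping group lasso min_β ½‖y − Xβ‖₂² + λ Σ_{g∈G} √(n_g)‖β_g‖₂. Let θ*(λ₀) be the dual optimal at regularization parameter λ₀ (equal to (y − Xβ*(λ₀))/λ₀ where β*(λ₀) is a primal optimum), and let 0 < λ < λ₀. Fix g ∈ G and let Ḡ₁ = {h ∈ G \ {g} : h ⊆ g}. If min over w_h with ‖w_h‖₂ ≤ 1 (h ∈ Ḡ₁) of √( Σ_{j∈g} ( x_jᵀθ*(λ₀) − Σ_{h∈Ḡ₁: j∈h} √(n_h)(w_h)_j )² ) < √(n_g) − ‖X_g‖_F‖y‖₂·(1/λ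 − 1/λ₀), then β*_g(λ) = 0 for every optimal solution β*(λ) at parameter λ. -/
/-- The overlapping group lasso objective ½‖y − Xβ‖² + λ Σ_g √(n_g)‖β_g‖₂. -/
noncomputable def ogLassoObj {N J : ℕ} (X : Matrix (Fin N) (Fin J) ℝ) (y : Fin N → ℝ)
    (G : Finset (Finset (Fin J))) (lam : ℝ) (β : Fin J → ℝ) : ℝ :=
  (1 / 2) * (∑ i, (y i - X.mulVec β i) ^ 2)
    + lam * ∑ h ∈ G, Real.sqrt (h.card : ℝ) * Real.sqrt (∑ j ∈ h, β j ^ 2)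

lemma ols_cs {ι : Type*} (s : Finset ι) (f g : ι → ℝ) :
    ∑ i ∈ s, f i * g i ≤
      Real.sqrt (∑ i ∈ s, f i ^ 2) * Real.sqrt (∑ i ∈ s, g i ^ 2) := by
  calc ∑ i ∈ s, f i * g i ≤ |∑ i ∈ s, f i * g i| := le_abs_self _
    _ = Real.sqrt ((∑ i ∈ s, f i * g i) ^ 2) := (Real.sqrt_sq_eq_abs _).symm
    _ ≤ Real.sqrt ((∑ i ∈ s, f i ^ 2) * ∑ i ∈ s, g i ^ 2) :=
        Real.sqrt_le_sqrt (Finset.sum_mul_sq_le_sq_mul_sq s f g)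
    _ = _ := Real.sqrt_mul (Finset.sum_nonneg fun i _ => sq_nonneg _) _

/-- Triangle inequality for the Euclidean seminorm on a finset. -/
lemma ols_tri {ι : Type*} (s : Finset ι) (f g : ι → ℝ) :
    Real.sqrt (∑ i ∈ s, (f i + g i) ^ 2) ≤
      Real.sqrt (∑ i ∈ s, f i ^ 2) + Real.sqrt (∑ i ∈ s, g i ^ 2) := by
  have hf : 0 ≤ Real.sqrt (∑ i ∈ s, f i ^ 2) := Real.sqrt_nonneg _
  have hg : 0 ≤ Real.sqrt (∑ i ∈ s, g i ^ 2) := Real.sqrt_nonneg _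
  have hf2 : Real.sqrt (∑ i ∈ s, f i ^ 2) ^ 2 = ∑ i ∈ s, f i ^ 2 :=
    Real.sq_sqrt (Finset.sum_nonneg fun i _ => sq_nonneg _)
  have hg2 : Real.sqrt (∑ i ∈ s, g i ^ 2) ^ 2 = ∑ i ∈ s, g i ^ 2 :=
    Real.sq_sqrt (Finset.sum_nonneg fun i _ => sq_nonneg _)
  have hcs := ols_cs s f g
  have key : ∑ i ∈ s, (f i + g i) ^ 2 ≤
      (Real.sqrt (∑ i ∈ s, f i ^ 2) + Real.sqrt (∑ i ∈ s, g i ^ 2)) ^ 2 := by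
    have : ∑ i ∈ s, (f i + g i) ^ 2
        = ∑ i ∈ s, f i ^ 2 + 2 * ∑ i ∈ s, f i * g i + ∑ i ∈ s, g i ^ 2 := by
      rw [Finset.mul_sum, ← Finset.sum_add_distrib, ← Finset.sum_add_distrib]
      exact Finset.sum_congr rfl fun i _ => by ring
    nlinarith
  calc Real.sqrt (∑ i ∈ s, (f i + g i) ^ 2) ≤
      Real.sqrt ((Real.sqrt (∑ i ∈ s, f i ^ 2) + Real.sqrt (∑ i ∈ s, g i ^ 2)) ^ 2) :=
        Real.sqrt_le_sqrt key
    _ = _ := Real.sqrt_sq (by positivity)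

/-- Scaling. -/
lemma ols_smul {ι : Type*} (s : Finset ι) (f : ι → ℝ) {c : ℝ} (hc : 0 ≤ c) :
    Real.sqrt (∑ i ∈ s, (c * f i) ^ 2) = c * Real.sqrt (∑ i ∈ s, f i ^ 2) := by
  have : ∑ i ∈ s, (c * f i) ^ 2 = c ^ 2 * ∑ i ∈ s, f i ^ 2 := by
    rw [Finset.mul_sum]; exact Finset.sum_congr rfl fun i _ => by ring
  rw [this, Real.sqrt_mul (sq_nonneg c), Real.sqrt_sq hc]

/-- Monotonicity. -/
lemma ols_mono {ι : Type*} (s : Finset ι) {f g : ι → ℝ}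
    (h : ∀ i ∈ s, f i ^ 2 ≤ g i ^ 2) :
    Real.sqrt (∑ i ∈ s, f i ^ 2) ≤ Real.sqrt (∑ i ∈ s, g i ^ 2) :=
  Real.sqrt_le_sqrt (Finset.sum_le_sum h)

/-- Limiting lemma. -/
lemma ols_lim {a b c : ℝ} (hc : 0 ≤ c)
    (h : ∀ t : ℝ, 0 < t → t ≤ 1 → a ≤ t * c + b) : a ≤ b := by
  refine le_of_forall_pos_le_add fun ε hε => ?_
  rcases eq_or_lt_of_le hc with h0 | h0
  · have := h 1 one_pos le_rfl; rw [← h0] at this; linarith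
  · have ht := h (min 1 (ε / c)) (lt_min one_pos (div_pos hε h0)) (min_le_left _ _)
    have h2 : min 1 (ε / c) * c ≤ ε := by
      calc min 1 (ε / c) * c ≤ (ε / c) * c :=
            mul_le_mul_of_nonneg_right (min_le_right _ _) hc
        _ = ε := div_mul_cancel₀ _ (ne_of_gt h0)
    linarith

noncomputable def olsOm {J : ℕ} (G : Finset (Finset (Fin J))) (β : Fin J → ℝ) : ℝ :=
  ∑ h ∈ G, Real.sqrt (h.card : ℝ) * Real.sqrt (∑ j ∈ h, β j ^ 2)

lemma olsOm_nonneg {J : ℕ} (G : Finset (Finset (Fin J))) (β : Fin J → ℝ) :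
    0 ≤ olsOm G β :=
  Finset.sum_nonneg fun h _ => mul_nonneg (Real.sqrt_nonneg _) (Real.sqrt_nonneg _)

lemma ogLassoObj_eq {N J : ℕ} (X : Matrix (Fin N) (Fin J) ℝ) (y : Fin N → ℝ)
    (G : Finset (Finset (Fin J))) (lam : ℝ) (β : Fin J → ℝ) :
    ogLassoObj X y G lam β
      = (1 / 2) * (∑ i, (y i - X.mulVec β i) ^ 2) + lam * olsOm G β := rfl

lemma olsOm_convex {J : ℕ} (G : Finset (Finset (Fin J))) (a b : Fin J → ℝ) {t : ℝ}
    (h0 : 0 ≤ t) (h1 : t ≤ 1) :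
    olsOm G (fun j => a j + t * (b j - a j))
      ≤ olsOm G a + t * (olsOm G b - olsOm G a) := by
  have hrw : olsOm G a + t * (olsOm G b - olsOm G a)
      = (1 - t) * olsOm G a + t * olsOm G b := by ring
  rw [hrw]
  unfold olsOm
  rw [Finset.mul_sum, Finset.mul_sum, ← Finset.sum_add_distrib]
  refine Finset.sum_le_sum fun h _ => ?_
  have e : (∑ j ∈ h, (a j + t * (b j - a j)) ^ 2)
      = ∑ j ∈ h, ((1 - t) * a j + t * b j) ^ 2 :=
    Finset.sum_congr rfl fun j _ => by ring
  have key : Real.sqrt (∑ j ∈ h, (a j + t * (b j - a j)) ^ 2)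
      ≤ (1 - t) * Real.sqrt (∑ j ∈ h, a j ^ 2) + t * Real.sqrt (∑ j ∈ h, b j ^ 2) := by
    rw [e]
    calc Real.sqrt (∑ j ∈ h, ((1 - t) * a j + t * b j) ^ 2)
        ≤ Real.sqrt (∑ j ∈ h, ((1 - t) * a j) ^ 2)
            + Real.sqrt (∑ j ∈ h, (t * b j) ^ 2) :=
          ols_tri h (fun j => (1 - t) * a j) (fun j => t * b j)
      _ = (1 - t) * Real.sqrt (∑ j ∈ h, a j ^ 2) + t * Real.sqrt (∑ j ∈ h, b j ^ 2) := by
          rw [ols_smul h a (by linarith), ols_smul h b h0]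
  calc Real.sqrt (h.card : ℝ) * Real.sqrt (∑ j ∈ h, (a j + t * (b j - a j)) ^ 2)
      ≤ Real.sqrt (h.card : ℝ)
          * ((1 - t) * Real.sqrt (∑ j ∈ h, a j ^ 2) + t * Real.sqrt (∑ j ∈ h, b j ^ 2)) :=
        mul_le_mul_of_nonneg_left key (Real.sqrt_nonneg _)
    _ = _ := by ring

lemma olsOm_two {J : ℕ} (G : Finset (Finset (Fin J))) (β : Fin J → ℝ) :
    olsOm G (fun j => 2 * β j) = 2 * olsOm G β := by
  unfold olsOm
  rw [Finset.mul_sum]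
  refine Finset.sum_congr rfl fun h _ => ?_
  rw [ols_smul h β (by norm_num : (0:ℝ) ≤ 2)]; ring

lemma olsOm_zero {J : ℕ} (G : Finset (Finset (Fin J))) :
    olsOm G (fun _ => (0:ℝ)) = 0 := by
  unfold olsOm; simp

lemma ols_subgrad {N J : ℕ} (X : Matrix (Fin N) (Fin J) ℝ) (y : Fin N → ℝ)
    (G : Finset (Finset (Fin J))) {lam : ℝ} (hlam : 0 < lam) {βs : Fin J → ℝ}
    (hopt : ∀ β, ogLassoObj X y G lam βs ≤ ogLassoObj X y G lam β) (β : Fin J → ℝ) :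
    ∑ j, (∑ i, X i j * (y i - X.mulVec βs i)) * (β j - βs j)
      ≤ lam * (olsOm G β - olsOm G βs) := by
  set ρ : Fin N → ℝ := fun i => y i - X.mulVec βs i with hρ
  set Dv : Fin N → ℝ := X.mulVec (fun j => β j - βs j) with hDv
  have hQ : (0:ℝ) ≤ (∑ i, Dv i ^ 2) / 2 := by positivity
  have key : ∀ t : ℝ, 0 < t → t ≤ 1 →
      ∑ i, ρ i * Dv i ≤ t * ((∑ i, Dv i ^ 2) / 2) + lam * (olsOm G β - olsOm G βs) := by
    intro t ht0 ht1
    have hmv : ∀ i, X.mulVec (fun j => βs j + t * (β j - βs j)) i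
        = X.mulVec βs i + t * Dv i := by
      intro i
      simp only [hDv, Matrix.mulVec, dotProduct]
      rw [Finset.mul_sum, ← Finset.sum_add_distrib]
      exact Finset.sum_congr rfl fun j _ => by ring
    have hβt := hopt (fun j => βs j + t * (β j - βs j))
    rw [ogLassoObj_eq, ogLassoObj_eq] at hβt
    have hquad : ∑ i, (y i - X.mulVec (fun j => βs j + t * (β j - βs j)) i) ^ 2
        = ∑ i, ρ i ^ 2 - 2 * t * (∑ i, ρ i * Dv i) + t ^ 2 * ∑ i, Dv i ^ 2 := by
      calc ∑ i, (y i - X.mulVec (fun j => βs j + t * (β j - βs j)) i) ^ 2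
          = ∑ i, (ρ i ^ 2 - 2 * t * (ρ i * Dv i) + t ^ 2 * Dv i ^ 2) :=
            Finset.sum_congr rfl fun i _ => by rw [hmv i]; simp only [hρ]; ring
        _ = _ := by
            rw [Finset.sum_add_distrib, Finset.sum_sub_distrib, ← Finset.mul_sum,
              ← Finset.mul_sum]
    have hconv := olsOm_convex G βs β (le_of_lt ht0) ht1
    rw [hquad] at hβt
    have hlc : lam * olsOm G (fun j => βs j + t * (β j - βs j))
        ≤ lam * (olsOm G βs + t * (olsOm G β - olsOm G βs)) :=
      mul_le_mul_of_nonneg_left hconv (le_of_lt hlam)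
    have hmain : t * (∑ i, ρ i * Dv i)
        ≤ t * (t * ((∑ i, Dv i ^ 2) / 2) + lam * (olsOm G β - olsOm G βs)) := by
      nlinarith [hβt, hlc]
    exact le_of_mul_le_mul_left hmain ht0
  have hfin := ols_lim hQ key
  have hswap : ∑ i, ρ i * Dv i
      = ∑ j, (∑ i, X i j * ρ i) * (β j - βs j) := by
    simp only [hDv, Matrix.mulVec, dotProduct, Finset.mul_sum, Finset.sum_mul]
    rw [Finset.sum_comm]
    exact Finset.sum_congr rfl fun j _ => Finset.sum_congr rfl fun i _ => by ring
  rw [hswap] at hfin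
  exact hfin

lemma ols_inner_eq {N J : ℕ} (X : Matrix (Fin N) (Fin J) ℝ) (y : Fin N → ℝ)
    (G : Finset (Finset (Fin J))) {lam : ℝ} (hlam : 0 < lam) {βs : Fin J → ℝ}
    (hopt : ∀ β, ogLassoObj X y G lam βs ≤ ogLassoObj X y G lam β) :
    ∑ j, (∑ i, X i j * (y i - X.mulVec βs i)) * βs j = lam * olsOm G βs := by
  have h2 := ols_subgrad X y G hlam hopt (fun j => 2 * βs j)
  have h0 := ols_subgrad X y G hlam hopt (fun _ => (0:ℝ))
  rw [olsOm_two] at h2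
  rw [olsOm_zero] at h0
  have e2 : ∑ j, (∑ i, X i j * (y i - X.mulVec βs i)) * (2 * βs j - βs j)
      = ∑ j, (∑ i, X i j * (y i - X.mulVec βs i)) * βs j :=
    Finset.sum_congr rfl fun j _ => by ring
  have e0 : ∑ j, (∑ i, X i j * (y i - X.mulVec βs i)) * (0 - βs j)
      = - ∑ j, (∑ i, X i j * (y i - X.mulVec βs i)) * βs j := by
    rw [← Finset.sum_neg_distrib]
    exact Finset.sum_congr rfl fun j _ => by ring
  rw [e2] at h2
  rw [e0] at h0
  linarith

lemma ols_inner_le {N J : ℕ} (X : Matrix (Fin N) (Fin J) ℝ) (y : Fin N → ℝ)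
    (G : Finset (Finset (Fin J))) {lam : ℝ} (hlam : 0 < lam) {βs : Fin J → ℝ}
    (hopt : ∀ β, ogLassoObj X y G lam βs ≤ ogLassoObj X y G lam β) (β : Fin J → ℝ) :
    ∑ j, (∑ i, X i j * (y i - X.mulVec βs i)) * β j ≤ lam * olsOm G β := by
  have h := ols_subgrad X y G hlam hopt β
  have e : ∑ j, (∑ i, X i j * (y i - X.mulVec βs i)) * (β j - βs j)
      = ∑ j, (∑ i, X i j * (y i - X.mulVec βs i)) * β j
        - ∑ j, (∑ i, X i j * (y i - X.mulVec βs i)) * βs j := by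
    rw [← Finset.sum_sub_distrib]
    exact Finset.sum_congr rfl fun j _ => by ring
  rw [e, ols_inner_eq X y G hlam hopt] at h
  linarith

lemma ols_exp {ι : Type*} (s : Finset ι) (f g : ι → ℝ) (a b c : ℝ) :
    (a * ∑ i ∈ s, f i - b * ∑ i ∈ s, g i) * c = ∑ i ∈ s, (a * f i - b * g i) * c := by
  rw [Finset.mul_sum, Finset.mul_sum, ← Finset.sum_sub_distrib, Finset.sum_mul]

lemma ols_arith {lam lam0 : ℝ} (a b c : ℝ) (h1 : 0 < lam) (h0 : 0 < lam0) :
    (lam0 * a - lam * b) * ((c - a) - (c - b)) = lam * lam0 *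
      (- lam * (a / lam - b / lam0) ^ 2
        + (lam0 - lam) * ((a / lam - b / lam0) * (b / lam0))) := by
  field_simp
  ring


set_option maxHeartbeats 2000000 in
/-- Theorem 1 (OLS screening rule): if for some feasible subgradients w_h on the
inclusive subgroups Ḡ₁ the screening quantity is below
√(n_g) − ‖X_g‖_F‖y‖₂(1/λ − 1/λ₀), then every solution at λ has β*_g(λ) = 0. -/
theorem ols_screening {N J : ℕ} (X : Matrix (Fin N) (Fin J) ℝ) (y : Fin N → ℝ)
    (lam lam0 : ℝ) (hlam : 0 < lam) (hll : lam < lam0)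
    (G : Finset (Finset (Fin J))) (g : Finset (Fin J)) (hg : g ∈ G)
    (β0 : Fin J → ℝ) (hopt0 : ∀ β : Fin J → ℝ, ogLassoObj X y G lam0 β0 ≤ ogLassoObj X y G lam0 β)
    (θstar : Fin N → ℝ) (hθ : ∀ i, θstar i = (y i - X.mulVec β0 i) / lam0)
    (G1 : Finset (Finset (Fin J))) (hG1 : G1 = (G.erase g).filter (fun h => h ⊆ g))
    (w : Finset (Fin J) → Fin J → ℝ)
    (hw : ∀ h ∈ G1, Real.sqrt (∑ j ∈ h, (w h j) ^ 2) ≤ 1)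
    (hscreen : Real.sqrt (∑ j ∈ g,
        ((∑ i, X i j * θstar i)
          - ∑ h ∈ G1, (if j ∈ h then Real.sqrt (h.card : ℝ) * w h j else 0)) ^ 2)
      < Real.sqrt (g.card : ℝ)
        - Real.sqrt (∑ j ∈ g, ∑ i, X i j ^ 2) * Real.sqrt (∑ i, y i ^ 2)
          * (1 / lam - 1 / lam0)) :
    ∀ β1 : Fin J → ℝ,
      (∀ β : Fin J → ℝ, ogLassoObj X y G lam β1 ≤ ogLassoObj X y G lam β) →
      ∀ j ∈ g, β1 j = 0 := by
  intro β1 hopt1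
  have hlam0 : 0 < lam0 := lt_trans hlam hll
  set ρ0 : Fin N → ℝ := fun i => y i - X.mulVec β0 i with hρ0
  set ρ1 : Fin N → ℝ := fun i => y i - X.mulVec β1 i with hρ1
  set θ1 : Fin N → ℝ := fun i => ρ1 i / lam with hθ1
  set d : Fin N → ℝ := fun i => θ1 i - θstar i with hd
  set ny : ℝ := Real.sqrt (∑ i, y i ^ 2) with hny
  have hny0 : 0 ≤ ny := Real.sqrt_nonneg _
  -- optimality facts
  have h11 : ∑ j, (∑ i, X i j * ρ1 i) * β1 j = lam * olsOm G β1 :=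
    ols_inner_eq X y G hlam hopt1
  have h00 : ∑ j, (∑ i, X i j * ρ0 i) * β0 j = lam0 * olsOm G β0 :=
    ols_inner_eq X y G hlam0 hopt0
  have h10 : ∑ j, (∑ i, X i j * ρ1 i) * β0 j ≤ lam * olsOm G β0 :=
    ols_inner_le X y G hlam hopt1 β0
  have h01 : ∑ j, (∑ i, X i j * ρ0 i) * β1 j ≤ lam0 * olsOm G β1 :=
    ols_inner_le X y G hlam0 hopt0 β1
  -- monotonicity : 0 ≤ ∑ j (lam0 U1 - lam U0)(β1 - β0)
  have hK : (0:ℝ) ≤ ∑ j, (lam0 * (∑ i, X i j * ρ1 i) - lam * (∑ i, X i j * ρ0 i))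
      * (β1 j - β0 j) := by
    have expand : ∑ j, (lam0 * (∑ i, X i j * ρ1 i) - lam * (∑ i, X i j * ρ0 i))
          * (β1 j - β0 j)
        = lam0 * (∑ j, (∑ i, X i j * ρ1 i) * β1 j)
          - lam0 * (∑ j, (∑ i, X i j * ρ1 i) * β0 j)
          - lam * (∑ j, (∑ i, X i j * ρ0 i) * β1 j)
          + lam * (∑ j, (∑ i, X i j * ρ0 i) * β0 j) := by
      conv_rhs => rw [Finset.mul_sum, Finset.mul_sum, Finset.mul_sum, Finset.mul_sum,
        ← Finset.sum_sub_distrib, ← Finset.sum_sub_distrib, ← Finset.sum_add_distrib]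
      exact Finset.sum_congr rfl fun j _ => by ring
    rw [expand, h11, h00]
    nlinarith [mul_le_mul_of_nonneg_left h10 (le_of_lt hlam0),
      mul_le_mul_of_nonneg_left h01 (le_of_lt hlam)]
  -- rewrite hK in terms of d and θstar
  have hKd : (0:ℝ) ≤ lam * lam0
      * (- lam * (∑ i, d i ^ 2) + (lam0 - lam) * (∑ i, d i * θstar i)) := by
    have e1 : ∑ j, (lam0 * (∑ i, X i j * ρ1 i) - lam * (∑ i, X i j * ρ0 i))
          * (β1 j - β0 j)
        = ∑ i, (lam0 * ρ1 i - lam * ρ0 i) * (X.mulVec β1 i - X.mulVec β0 i) := by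
      rw [Finset.sum_congr rfl fun j (_ : j ∈ Finset.univ) =>
        ols_exp Finset.univ (fun i => X i j * ρ1 i) (fun i => X i j * ρ0 i)
          lam0 lam (β1 j - β0 j)]
      rw [Finset.sum_comm]
      refine Finset.sum_congr rfl fun i _ => ?_
      simp only [Matrix.mulVec, dotProduct]
      rw [mul_sub, Finset.mul_sum, Finset.mul_sum, ← Finset.sum_sub_distrib]
      exact Finset.sum_congr rfl fun j _ => by ring
    have e2 : ∀ i, (lam0 * ρ1 i - lam * ρ0 i) * (X.mulVec β1 i - X.mulVec β0 i)
        = lam * lam0 * (- lam * d i ^ 2 + (lam0 - lam) * (d i * θstar i)) := by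
      intro i
      have hdi : d i = ρ1 i / lam - ρ0 i / lam0 := by
        rw [show d i = θ1 i - θstar i from rfl, show θ1 i = ρ1 i / lam from rfl, hθ i]
      have hsi : θstar i = ρ0 i / lam0 := hθ i
      have hx1 : X.mulVec β1 i = y i - ρ1 i := by simp only [hρ1]; ring
      have hx0 : X.mulVec β0 i = y i - ρ0 i := by simp only [hρ0]; ring
      rw [hdi, hsi, hx1, hx0]
      exact ols_arith (ρ1 i) (ρ0 i) (y i) hlam hlam0
    calc (0:ℝ) ≤ ∑ j, (lam0 * (∑ i, X i j * ρ1 i) - lam * (∑ i, X i j * ρ0 i))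
        * (β1 j - β0 j) := hK
      _ = ∑ i, (lam0 * ρ1 i - lam * ρ0 i) * (X.mulVec β1 i - X.mulVec β0 i) := e1
      _ = ∑ i, lam * lam0 * (- lam * d i ^ 2 + (lam0 - lam) * (d i * θstar i)) :=
          Finset.sum_congr rfl fun i _ => e2 i
      _ = lam * lam0 * (- lam * (∑ i, d i ^ 2) + (lam0 - lam) * (∑ i, d i * θstar i)) := by
          rw [← Finset.mul_sum]
          congr 1
          rw [Finset.sum_add_distrib, ← Finset.mul_sum, ← Finset.mul_sum]
  have hmono : lam * (∑ i, d i ^ 2) ≤ (lam0 - lam) * (∑ i, d i * θstar i) := by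
    have hpos : (0:ℝ) < lam * lam0 := mul_pos hlam hlam0
    nlinarith [hKd]
  -- bound on θstar
  have hθ0norm : Real.sqrt (∑ i, θstar i ^ 2) ≤ ny / lam0 := by
    have hobj := hopt0 (fun _ => (0:ℝ))
    rw [ogLassoObj_eq, ogLassoObj_eq, olsOm_zero] at hobj
    have hmv0 : ∀ i, X.mulVec (fun _ => (0:ℝ)) i = 0 := by
      intro i; simp [Matrix.mulVec, dotProduct]
    have hy : ∑ i, (y i - X.mulVec (fun _ => (0:ℝ)) i) ^ 2 = ∑ i, y i ^ 2 :=
      Finset.sum_congr rfl fun i _ => by rw [hmv0 i]; ring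
    rw [hy] at hobj
    have hOm0 : 0 ≤ olsOm G β0 := olsOm_nonneg G β0
    have hρy : ∑ i, ρ0 i ^ 2 ≤ ∑ i, y i ^ 2 := by nlinarith
    have hts : ∀ i, θstar i = (1 / lam0) * ρ0 i := by
      intro i; rw [hθ i]; field_simp; rfl
    have : Real.sqrt (∑ i, θstar i ^ 2)
        = (1 / lam0) * Real.sqrt (∑ i, ρ0 i ^ 2) := by
      rw [Finset.sum_congr rfl fun i _ => by rw [hts i]]
      exact ols_smul Finset.univ ρ0 (by positivity)
    rw [this]
    have := Real.sqrt_le_sqrt hρy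
    rw [← hny] at this
    calc (1 / lam0) * Real.sqrt (∑ i, ρ0 i ^ 2) ≤ (1 / lam0) * ny :=
        mul_le_mul_of_nonneg_left this (by positivity)
      _ = ny / lam0 := by ring
  -- dual distance bound
  have hdist : Real.sqrt (∑ i, d i ^ 2) ≤ ny * (1 / lam - 1 / lam0) := by
    set s := Real.sqrt (∑ i, d i ^ 2) with hs
    have hs0 : 0 ≤ s := Real.sqrt_nonneg _
    have hs2 : s ^ 2 = ∑ i, d i ^ 2 :=
      Real.sq_sqrt (Finset.sum_nonneg fun i _ => sq_nonneg _)
    have hcs : ∑ i, d i * θstar i ≤ s * (ny / lam0) :=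
      le_trans (ols_cs Finset.univ d θstar)
        (mul_le_mul_of_nonneg_left hθ0norm hs0)
    have hkey : lam * s ^ 2 ≤ (lam0 - lam) * (s * (ny / lam0)) := by
      rw [hs2]
      calc lam * (∑ i, d i ^ 2) ≤ (lam0 - lam) * (∑ i, d i * θstar i) := hmono
        _ ≤ (lam0 - lam) * (s * (ny / lam0)) :=
            mul_le_mul_of_nonneg_left hcs (by linarith)
    rcases eq_or_lt_of_le hs0 with h0 | h0
    · rw [← h0]
      have h1 : 0 ≤ 1 / lam - 1 / lam0 := by
        rw [sub_nonneg]
        exact one_div_le_one_div_of_le hlam (le_of_lt hll)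
      positivity
    · have h1 : lam * s ≤ (lam0 - lam) * (ny / lam0) := by
        have h2 : (lam * s) * s ≤ ((lam0 - lam) * (ny / lam0)) * s := by nlinarith [hkey]
        exact le_of_mul_le_mul_right h2 h0
      have h3 : s ≤ (lam0 - lam) * (ny / lam0) / lam := by
        rw [le_div_iff₀ hlam]; linarith
      have heq : ny * (1 / lam - 1 / lam0) = (lam0 - lam) * (ny / lam0) / lam := by
        field_simp
      rw [heq]
      exact h3
  -- column / group quantities
  set u1 : Fin J → ℝ := fun j => ∑ i, X i j * θ1 i with hu1
  set u0 : Fin J → ℝ := fun j => ∑ i, X i j * θstar i with hu0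
  set sv : Fin J → ℝ := fun j =>
    ∑ h ∈ G1, (if j ∈ h then Real.sqrt (h.card : ℝ) * w h j else 0) with hsv
  have hFnorm : 0 ≤ Real.sqrt (∑ j ∈ g, ∑ i, X i j ^ 2) := Real.sqrt_nonneg _
  have hcol : Real.sqrt (∑ j ∈ g, (u1 j - u0 j) ^ 2)
      ≤ Real.sqrt (∑ j ∈ g, ∑ i, X i j ^ 2) * Real.sqrt (∑ i, d i ^ 2) := by
    have hper : ∀ j, (u1 j - u0 j) ^ 2 ≤ (∑ i, X i j ^ 2) * ∑ i, d i ^ 2 := by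
      intro j
      have he : u1 j - u0 j = ∑ i, X i j * d i := by
        rw [show u1 j = ∑ i, X i j * θ1 i from rfl,
          show u0 j = ∑ i, X i j * θstar i from rfl, ← Finset.sum_sub_distrib]
        exact Finset.sum_congr rfl fun i _ => by
          rw [show d i = θ1 i - θstar i from rfl]; ring
      rw [he]
      exact Finset.sum_mul_sq_le_sq_mul_sq Finset.univ (fun i => X i j) d
    have hsum : ∑ j ∈ g, (u1 j - u0 j) ^ 2
        ≤ (∑ j ∈ g, ∑ i, X i j ^ 2) * ∑ i, d i ^ 2 := by
      rw [Finset.sum_mul]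
      exact Finset.sum_le_sum fun j _ => hper j
    calc Real.sqrt (∑ j ∈ g, (u1 j - u0 j) ^ 2)
        ≤ Real.sqrt ((∑ j ∈ g, ∑ i, X i j ^ 2) * ∑ i, d i ^ 2) := Real.sqrt_le_sqrt hsum
      _ = _ := Real.sqrt_mul (by positivity) _
  have hr : Real.sqrt (∑ j ∈ g, (u1 j - sv j) ^ 2) < Real.sqrt (g.card : ℝ) := by
    have htri : Real.sqrt (∑ j ∈ g, (u1 j - sv j) ^ 2)
        ≤ Real.sqrt (∑ j ∈ g, (u0 j - sv j) ^ 2)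
          + Real.sqrt (∑ j ∈ g, (u1 j - u0 j) ^ 2) := by
      have he : ∑ j ∈ g, (u1 j - sv j) ^ 2
          = ∑ j ∈ g, ((u0 j - sv j) + (u1 j - u0 j)) ^ 2 :=
        Finset.sum_congr rfl fun j _ => by ring
      rw [he]
      exact ols_tri g _ _
    have hscreen' : Real.sqrt (∑ j ∈ g, (u0 j - sv j) ^ 2)
        < Real.sqrt (g.card : ℝ)
          - Real.sqrt (∑ j ∈ g, ∑ i, X i j ^ 2) * ny * (1 / lam - 1 / lam0) := hscreen
    have hcol2 : Real.sqrt (∑ j ∈ g, (u1 j - u0 j) ^ 2)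
        ≤ Real.sqrt (∑ j ∈ g, ∑ i, X i j ^ 2) * (ny * (1 / lam - 1 / lam0)) :=
      le_trans hcol (mul_le_mul_of_nonneg_left hdist hFnorm)
    calc Real.sqrt (∑ j ∈ g, (u1 j - sv j) ^ 2)
        ≤ Real.sqrt (∑ j ∈ g, (u0 j - sv j) ^ 2)
          + Real.sqrt (∑ j ∈ g, (u1 j - u0 j) ^ 2) := htri
      _ < (Real.sqrt (g.card : ℝ)
            - Real.sqrt (∑ j ∈ g, ∑ i, X i j ^ 2) * ny * (1 / lam - 1 / lam0))
          + Real.sqrt (∑ j ∈ g, ∑ i, X i j ^ 2) * (ny * (1 / lam - 1 / lam0)) :=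
        add_lt_add_of_lt_of_le hscreen' hcol2
      _ = Real.sqrt (g.card : ℝ) := by ring
  -- the zeroed-on-g vector
  set βt : Fin J → ℝ := fun j => if j ∈ g then 0 else β1 j with hβt
  have hβt0 : ∀ j ∈ g, βt j = 0 := fun j hj => by simp [hβt, hj]
  have hβt1 : ∀ j, j ∉ g → βt j = β1 j := fun j hj => by simp [hβt, hj]
  have hsub := ols_subgrad X y G hlam hopt1 βt
  have hL : ∑ j', (∑ i, X i j' * ρ1 i) * (βt j' - β1 j')
      = - ∑ j' ∈ g, (∑ i, X i j' * ρ1 i) * β1 j' := by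
    have e : ∀ j', (∑ i, X i j' * ρ1 i) * (βt j' - β1 j')
        = if j' ∈ g then -((∑ i, X i j' * ρ1 i) * β1 j') else 0 := by
      intro j'
      by_cases hm : j' ∈ g
      · rw [hβt0 j' hm, if_pos hm]; ring
      · rw [hβt1 j' hm, if_neg hm]; ring
    rw [Finset.sum_congr rfl fun j' _ => e j', Finset.sum_ite_mem, Finset.univ_inter,
      ← Finset.sum_neg_distrib]
  -- the Ω gap lower bound
  have hterm : ∀ h' : Finset (Fin J),
      Real.sqrt (∑ j' ∈ h', βt j' ^ 2) ≤ Real.sqrt (∑ j' ∈ h', β1 j' ^ 2) := by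
    intro h'
    apply ols_mono
    intro j' _
    by_cases hm : j' ∈ g
    · rw [hβt0 j' hm]; simpa using sq_nonneg (β1 j')
    · rw [hβt1 j' hm]
  have hzero : ∀ h' : Finset (Fin J), h' ⊆ g →
      Real.sqrt (∑ j' ∈ h', βt j' ^ 2) = 0 := by
    intro h' hsub'
    rw [Finset.sum_eq_zero fun j' hj' => by rw [hβt0 j' (hsub' hj')]; ring,
      Real.sqrt_zero]
  set a : Finset (Fin J) → ℝ := fun h' =>
    Real.sqrt (h'.card : ℝ) * Real.sqrt (∑ j' ∈ h', β1 j' ^ 2)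
      - Real.sqrt (h'.card : ℝ) * Real.sqrt (∑ j' ∈ h', βt j' ^ 2) with ha
  have hgap_eq : olsOm G β1 - olsOm G βt = ∑ h' ∈ G, a h' := by
    unfold olsOm
    rw [← Finset.sum_sub_distrib]
  have ha_nonneg : ∀ h' : Finset (Fin J), 0 ≤ a h' := by
    intro h'
    rw [show a h' = _ - _ from rfl, sub_nonneg]
    exact mul_le_mul_of_nonneg_left (hterm h') (Real.sqrt_nonneg _)
  have hG1sub : G1 ⊆ G.erase g := by rw [hG1]; exact Finset.filter_subset _ _
  have hG1g : ∀ h' ∈ G1, h' ⊆ g := by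
    intro h' hh'
    rw [hG1] at hh'
    exact (Finset.mem_filter.mp hh').2
  have hOmgap : Real.sqrt (g.card : ℝ) * Real.sqrt (∑ j' ∈ g, β1 j' ^ 2)
      + (∑ h ∈ G1, Real.sqrt (h.card : ℝ) * Real.sqrt (∑ j' ∈ h, β1 j' ^ 2))
      ≤ olsOm G β1 - olsOm G βt := by
    rw [hgap_eq, ← Finset.add_sum_erase G a hg]
    have hag : a g = Real.sqrt (g.card : ℝ) * Real.sqrt (∑ j' ∈ g, β1 j' ^ 2) := by
      rw [show a g = _ - _ from rfl, hzero g subset_rfl]; ring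
    have hW : ∑ h ∈ G1, Real.sqrt (h.card : ℝ) * Real.sqrt (∑ j' ∈ h, β1 j' ^ 2)
        ≤ ∑ h' ∈ G.erase g, a h' := by
      have e : ∀ h' ∈ G1,
          Real.sqrt (h'.card : ℝ) * Real.sqrt (∑ j' ∈ h', β1 j' ^ 2) = a h' := by
        intro h' hh'
        rw [show a h' = _ - _ from rfl, hzero h' (hG1g h' hh')]; ring
      rw [Finset.sum_congr rfl e]
      exact Finset.sum_le_sum_of_subset_of_nonneg hG1sub fun h' _ _ => ha_nonneg h'
    rw [hag]
    linarith [hW]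
  -- the inner product upper bound
  have hRHS : ∑ j' ∈ g, (∑ i, X i j' * ρ1 i) * β1 j'
      = lam * ∑ j' ∈ g, u1 j' * β1 j' := by
    rw [Finset.mul_sum]
    refine Finset.sum_congr rfl fun j' _ => ?_
    have e : u1 j' = (∑ i, X i j' * ρ1 i) / lam := by
      rw [show u1 j' = ∑ i, X i j' * θ1 i from rfl, Finset.sum_div]
      exact Finset.sum_congr rfl fun i _ => by
        rw [show θ1 i = ρ1 i / lam from rfl]; ring
    rw [e]
    field_simp
  have hu1b : ∑ j' ∈ g, u1 j' * β1 j'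
      ≤ Real.sqrt (∑ j' ∈ g, (u1 j' - sv j') ^ 2) * Real.sqrt (∑ j' ∈ g, β1 j' ^ 2)
        + ∑ h ∈ G1, Real.sqrt (h.card : ℝ) * Real.sqrt (∑ j' ∈ h, β1 j' ^ 2) := by
    have hsplit2 : ∑ j' ∈ g, u1 j' * β1 j'
        = ∑ j' ∈ g, (u1 j' - sv j') * β1 j' + ∑ j' ∈ g, sv j' * β1 j' := by
      rw [← Finset.sum_add_distrib]
      exact Finset.sum_congr rfl fun _ _ => by ring
    have h1b : ∑ j' ∈ g, (u1 j' - sv j') * β1 j'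
        ≤ Real.sqrt (∑ j' ∈ g, (u1 j' - sv j') ^ 2) * Real.sqrt (∑ j' ∈ g, β1 j' ^ 2) :=
      ols_cs g _ _
    have h2b : ∑ j' ∈ g, sv j' * β1 j'
        ≤ ∑ h ∈ G1, Real.sqrt (h.card : ℝ) * Real.sqrt (∑ j' ∈ h, β1 j' ^ 2) := by
      have e : ∑ j' ∈ g, sv j' * β1 j'
          = ∑ h ∈ G1, ∑ j' ∈ g,
              (if j' ∈ h then Real.sqrt (h.card : ℝ) * w h j' * β1 j' else 0) := by
        calc ∑ j' ∈ g, sv j' * β1 j'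
            = ∑ j' ∈ g, ∑ h ∈ G1,
                (if j' ∈ h then Real.sqrt (h.card : ℝ) * w h j' * β1 j' else 0) := by
              refine Finset.sum_congr rfl fun j' _ => ?_
              rw [show sv j' = ∑ h ∈ G1,
                (if j' ∈ h then Real.sqrt (h.card : ℝ) * w h j' else 0) from rfl,
                Finset.sum_mul]
              exact Finset.sum_congr rfl fun h _ => by rw [ite_mul, zero_mul]
          _ = _ := Finset.sum_comm
      rw [e]
      refine Finset.sum_le_sum fun h hh => ?_
      have e2 : ∑ j' ∈ g, (if j' ∈ h then Real.sqrt (h.card : ℝ) * w h j' * β1 j' else 0)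
          = Real.sqrt (h.card : ℝ) * ∑ j' ∈ h, w h j' * β1 j' := by
        rw [Finset.sum_ite_mem, Finset.inter_eq_right.mpr (hG1g h hh), Finset.mul_sum]
        exact Finset.sum_congr rfl fun _ _ => by ring
      rw [e2]
      refine mul_le_mul_of_nonneg_left ?_ (Real.sqrt_nonneg _)
      calc ∑ j' ∈ h, w h j' * β1 j'
          ≤ Real.sqrt (∑ j' ∈ h, w h j' ^ 2) * Real.sqrt (∑ j' ∈ h, β1 j' ^ 2) :=
            ols_cs h _ _
        _ ≤ 1 * Real.sqrt (∑ j' ∈ h, β1 j' ^ 2) :=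
            mul_le_mul_of_nonneg_right (hw h hh) (Real.sqrt_nonneg _)
        _ = _ := one_mul _
    rw [hsplit2]
    exact add_le_add h1b h2b
  -- combine everything
  have hOmle : olsOm G β1 - olsOm G βt ≤ ∑ j' ∈ g, u1 j' * β1 j' := by
    rw [hL] at hsub
    have h1 : lam * (olsOm G β1 - olsOm G βt) ≤ lam * (∑ j' ∈ g, u1 j' * β1 j') := by
      rw [← hRHS]
      nlinarith [hsub]
    exact le_of_mul_le_mul_left h1 hlam
  have hBge : 0 ≤ Real.sqrt (∑ j' ∈ g, β1 j' ^ 2) := Real.sqrt_nonneg _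
  have hchain : Real.sqrt (g.card : ℝ) * Real.sqrt (∑ j' ∈ g, β1 j' ^ 2)
      ≤ Real.sqrt (∑ j' ∈ g, (u1 j' - sv j') ^ 2) * Real.sqrt (∑ j' ∈ g, β1 j' ^ 2) := by
    linarith [hOmgap, hu1b, hOmle]
  have hB0 : Real.sqrt (∑ j' ∈ g, β1 j' ^ 2) = 0 := by
    rcases eq_or_lt_of_le hBge with h0 | h0
    · exact h0.symm
    · nlinarith [hr, hchain, h0]
  have hsum0 : ∑ j' ∈ g, β1 j' ^ 2 = 0 :=
    (Real.sqrt_eq_zero (Finset.sum_nonneg fun j' _ => sq_nonneg _)).mp hB0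
  intro j hj
  have := (Finset.sum_eq_zero_iff_of_nonneg fun j' _ => sq_nonneg (β1 j')).mp hsum0 j hj
  exact (pow_eq_zero_iff two_ne_zero).mp this
end
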